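/- Let α ∈ (0,1) be irrational and let r_0 < r_1 < r_2 < … be its complete left best approximation (the increasing enumeration of all left best approximants of α, with r_0 = 0). Then for every i, r_{i+1} − r_i > r_{i+2} − r_{i+1}, i.e., the gaps between consecutive complete left best approximants are strictly decreasing. -/
import Mathlib


/-- Let `r 0 < r 1 < r 2 < …` be the complete left best
approximation of an irrational `α ∈ (0,1)` (the increasing enumeration of all left
best approximants, with `r 0 = 0`). Then the gaps between consecutive terms are
strictly decreasing: `r (i+2) - r (i+1) < r (i+1) - r i`. -/
theorem complete_left_best_gaps (α : ℝ) (hirr : Irrational α) (h0 : 0 < α) (h1 : α < 1)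
    (r : ℕ → ℚ) (hmono : StrictMono r) (hr0 : r 0 = 0)
    (hlba : ∀ i : ℕ, 0 ≤ r i ∧ ((r i : ℝ) < α) ∧
      ∀ c d : ℕ, 0 < d → d ≤ (r i).den → ((c : ℝ) / d ≤ ((r i : ℚ) : ℝ) ∨ α < (c : ℝ) / d))
    (hcomplete : ∀ x : ℚ, 0 ≤ x → (x : ℝ) < α →
      (∀ c d : ℕ, 0 < d → d ≤ x.den → ((c : ℝ) / d ≤ (x : ℝ) ∨ α < (c : ℝ) / d)) →
      ∃ i, r i = x) :
    ∀ i : ℕ, r (i + 2) - r (i + 1) < r (i + 1) - r i := by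
  -- Step 1: denominators are strictly increasing along r
  have hden : ∀ i j : ℕ, i < j → (r i).den < (r j).den := by
    intro i j hij
    by_contra h
    push_neg at h
    obtain ⟨hnn, hlt, hprop⟩ := hlba i
    have hnnj : (0:ℚ) ≤ r j := (hlba j).1
    have hnum : (0:ℤ) ≤ (r j).num := Rat.num_nonneg.mpr hnnj
    have hcast : (((r j).num.toNat : ℝ)) / ((r j).den : ℝ) = ((r j : ℚ) : ℝ) := by
      have h2 : (((r j).num.toNat : ℕ) : ℝ) = ((r j).num : ℝ) := by
        exact_mod_cast Int.toNat_of_nonneg hnum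
      rw [Rat.cast_def, h2]
    rcases hprop (r j).num.toNat (r j).den (r j).pos h with hc | hc
    · rw [hcast] at hc
      have : r j ≤ r i := by exact_mod_cast hc
      exact absurd (hmono hij) (not_lt.mpr this)
    · rw [hcast] at hc
      exact lt_asymm hc (hlba j).2.1
  -- Step 2: r (i+1) has minimal denominator among rationals in (r i, α)
  have hmin : ∀ i : ℕ, ∀ z : ℚ, r i < z → (z : ℝ) < α → (r (i+1)).den ≤ z.den := by
    intro i z hz hzα
    by_contra hcon
    push_neg at hcon
    set S : Set ℚ := {w : ℚ | r i < w ∧ (w : ℝ) < α} with hS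
    have hzS : z ∈ S := ⟨hz, hzα⟩
    set D : Set ℕ := Rat.den '' S with hD
    have hDne : D.Nonempty := ⟨z.den, z, hzS, rfl⟩
    set d0 : ℕ := sInf D with hd0
    obtain ⟨w0, hw0S, hw0den⟩ := Nat.sInf_mem hDne
    have hd0le : d0 ≤ z.den := Nat.sInf_le ⟨z, hzS, rfl⟩
    have hd0pos : 0 < d0 := by rw [hd0, ← hw0den]; exact w0.pos
    -- pick the element of S with denominator d0 and maximal numerator
    have hbdd : ∃ b : ℤ, ∀ n : ℤ, (∃ w : ℚ, w ∈ S ∧ w.den = d0 ∧ w.num = n) → n ≤ b := by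
      refine ⟨d0, ?_⟩
      rintro n ⟨w, hwS, hwden, hwnum⟩
      have hw1 : w < 1 := by
        have : (w : ℝ) < 1 := lt_trans hwS.2 h1
        exact_mod_cast this
      have hnd : w.num < (w.den : ℤ) := by
        by_contra hc
        push_neg at hc
        have : (1:ℚ) ≤ w := by
          rw [← Rat.num_div_den w, le_div_iff₀ (by exact_mod_cast w.pos), one_mul]
          exact_mod_cast hc
        linarith
      omega
    have hinh : ∃ n : ℤ, ∃ w : ℚ, w ∈ S ∧ w.den = d0 ∧ w.num = n :=
      ⟨w0.num, w0, hw0S, hw0den, rfl⟩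
    obtain ⟨N, ⟨q, hqS, hqden, hqnum⟩, hmax⟩ := Int.exists_greatest_of_bdd hbdd hinh
    -- q is a left best approximant
    have hq0 : (0:ℚ) ≤ q := le_of_lt (lt_of_le_of_lt (hlba i).1 hqS.1)
    have hqα : (q : ℝ) < α := hqS.2
    have hqba : ∀ c d : ℕ, 0 < d → d ≤ q.den → ((c : ℝ) / d ≤ (q : ℝ) ∨ α < (c : ℝ) / d) := by
      intro c d hd hdle
      by_cases hca : α < (c : ℝ) / d
      · exact Or.inr hca
      push_neg at hca
      have hrat : ((c : ℝ) / d) = (((c : ℚ) / (d : ℚ) : ℚ) : ℝ) := by push_cast; ring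
      have hlt : (c : ℝ) / d < α := by
        rcases lt_or_eq_of_le hca with h' | h'
        · exact h'
        · exact absurd h'.symm (by rw [hrat]; exact hirr.ne_rat _)
      by_cases hxc : (c : ℝ) / d ≤ ((r i : ℚ) : ℝ)
      · left
        have : ((r i : ℚ) : ℝ) < (q : ℝ) := by exact_mod_cast hqS.1
        linarith
      push_neg at hxc
      set w : ℚ := (c : ℚ) / (d : ℚ) with hw
      have hwr : (w : ℝ) = (c : ℝ) / d := by rw [hw]; push_cast; ring
      have hwS : w ∈ S := by
        constructor
        · have : ((r i : ℚ) : ℝ) < (w : ℝ) := by rw [hwr]; exact hxc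
          exact_mod_cast this
        · rw [hwr]; exact hlt
      have hwdle : w.den ≤ d := by
        have hdvd : (w.den : ℤ) ∣ (d : ℤ) := by
          have heq : w = Rat.divInt (c : ℤ) (d : ℤ) := by
            rw [hw, Rat.divInt_eq_div]; push_cast; ring
          rw [heq]
          exact Rat.den_dvd _ _
        exact_mod_cast Int.le_of_dvd (by exact_mod_cast hd) hdvd
      have hd0w : d0 ≤ w.den := Nat.sInf_le ⟨w, hwS, rfl⟩
      have hdeq : w.den = d0 := le_antisymm (le_trans hwdle (hdle.trans_eq hqden)) hd0w
      have hnle : w.num ≤ q.num := by rw [hqnum]; exact hmax w.num ⟨w, hwS, hdeq, rfl⟩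
      have hwq : w ≤ q := by
        rw [← Rat.num_div_den w, ← Rat.num_div_den q, hdeq, hqden]
        gcongr
      left
      rw [← hwr]
      exact_mod_cast hwq
    obtain ⟨j, hj⟩ := hcomplete q hq0 hqα hqba
    have hij : i < j := hmono.lt_iff_lt.mp (hj ▸ hqS.1)
    have hj1 : i + 1 ≤ j := hij
    rcases eq_or_lt_of_le hj1 with he | hl
    · have : (r (i+1)).den = d0 := by rw [he, hj, hqden]
      omega
    · have h2 := hden (i+1) j hl
      have : (r j).den = d0 := by rw [hj, hqden]
      omega
  -- Step 3: consecutive approximants are Farey neighbors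
  have huni : ∀ i : ℕ,
      (r (i+1)).num * ((r i).den : ℤ) - (r i).num * ((r (i+1)).den : ℤ) = 1 := by
    intro i
    set a : ℤ := (r i).num with ha
    set b : ℤ := ((r i).den : ℤ) with hb
    set a' : ℤ := (r (i+1)).num with ha'
    set b' : ℤ := ((r (i+1)).den : ℤ) with hb'
    have hbpos : 0 < b := by rw [hb]; exact_mod_cast (r i).pos
    have hb'pos : 0 < b' := by rw [hb']; exact_mod_cast (r (i+1)).pos
    have hbb' : b < b' := by rw [hb, hb']; exact_mod_cast hden i (i+1) (by omega)
    have hxy : r i < r (i+1) := hmono (by omega)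
    -- k := a' * b - a * b' is positive
    have hkpos : 0 < a' * b - a * b' := by
      have e1 : ((r i).num : ℚ)/((r i).den : ℚ) = r i := Rat.num_div_den _
      have e2 : ((r (i+1)).num : ℚ)/((r (i+1)).den : ℚ) = r (i+1) := Rat.num_div_den _
      rw [← e1, ← e2, div_lt_div_iff₀ (by exact_mod_cast (r i).pos)
        (by exact_mod_cast (r (i+1)).pos)] at hxy
      have : (r i).num * ((r (i+1)).den : ℤ) < (r (i+1)).num * ((r i).den : ℤ) := by
        exact_mod_cast hxy
      rw [ha, hb, ha', hb']
      linarith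
    -- Bezout for a', b'
    have hcop : IsCoprime a' b' := by
      rw [Int.isCoprime_iff_gcd_eq_one]
      have hred := (r (i+1)).reduced
      simpa [Int.gcd, ha', hb'] using hred
    obtain ⟨u, v, huv⟩ := hcop
    obtain ⟨p, q, key, hq0, hqlt⟩ : ∃ p q : ℤ, a' * q - b' * p = 1 ∧ 0 ≤ q ∧ q < b' := by
      refine ⟨-v - a' * (u / b'), u % b', ?_, Int.emod_nonneg u (ne_of_gt hb'pos),
        Int.emod_lt_of_pos u hb'pos⟩
      have h3 := Int.emod_add_mul_ediv u b'
      linear_combination a' * h3 + huv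
    have hqpos : 0 < q := by
      rcases eq_or_lt_of_le hq0 with h' | h'
      · exfalso
        have hdv : b' ∣ 1 := ⟨-p, by linear_combination -key - a' * h'⟩
        have := Int.le_of_dvd one_pos hdv
        omega
      · exact h'
    -- the fraction p/q lies strictly below r (i+1)
    have hwy : (p : ℚ) / (q : ℚ) < r (i+1) := by
      rw [← Rat.num_div_den (r (i+1)), div_lt_div_iff₀ (by exact_mod_cast hqpos)
        (by exact_mod_cast (r (i+1)).pos)]
      have : p * b' < a' * q := by linarith [key]
      exact_mod_cast this
    -- p/q must be ≤ r i, else it contradicts denominator minimality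
    have hwx : (p : ℚ) / (q : ℚ) ≤ r i := by
      by_contra hc
      push_neg at hc
      have hwα : (((p : ℚ) / (q : ℚ) : ℚ) : ℝ) < α := by
        calc (((p : ℚ) / (q : ℚ) : ℚ) : ℝ) < ((r (i+1) : ℚ) : ℝ) := by exact_mod_cast hwy
          _ < α := (hlba (i+1)).2.1
      have hden1 := hmin i _ hc hwα
      have hdvd : ((((p : ℚ) / (q : ℚ) : ℚ)).den : ℤ) ∣ q := by
        rw [show ((p : ℚ) / (q : ℚ) : ℚ) = Rat.divInt p q from (Rat.divInt_eq_div p q).symm]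
        exact Rat.den_dvd p q
      have hle : ((((p : ℚ) / (q : ℚ) : ℚ)).den : ℤ) ≤ q := Int.le_of_dvd hqpos hdvd
      have : b' ≤ ((((p : ℚ) / (q : ℚ) : ℚ)).den : ℤ) := by rw [hb']; exact_mod_cast hden1
      omega
    -- deduce a * q - b * p = 0
    have hwx' : (p : ℚ) / (q : ℚ) ≤ ((r i).num : ℚ) / ((r i).den : ℚ) := by
      rw [Rat.num_div_den]; exact hwx
    rw [div_le_div_iff₀ (by exact_mod_cast hqpos) (by exact_mod_cast (r i).pos)] at hwx'
    have hs0 : 0 ≤ a * q - b * p := by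
      have : (p : ℤ) * ((r i).den : ℤ) ≤ (r i).num * q := by exact_mod_cast hwx'
      rw [ha, hb]
      linarith
    have hid : (a * q - b * p) * b' + (a' * b - a * b') * q = b := by
      linear_combination b * key
    have hs : a * q - b * p = 0 := by
      by_contra hne
      have h1s : 1 ≤ a * q - b * p := by omega
      nlinarith [hid, hqpos, hkpos, hbb', hb'pos]
    -- so b = k * q and a = k * p, forcing k = 1 by coprimality
    have hbk : b = (a' * b - a * b') * q := by linear_combination b' * hs - hid
    have hak : a = (a' * b - a * b') * p := by
      have hq : q ≠ 0 := ne_of_gt hqpos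
      have hX : a * q = b * p := by linarith [hs]
      have hY : a * q = ((a' * b - a * b') * p) * q := by linear_combination hX + p * hbk
      exact mul_right_cancel₀ hq hY
    have hcopab : IsCoprime a b := by
      rw [Int.isCoprime_iff_gcd_eq_one]
      have hred := (r i).reduced
      simpa [Int.gcd, ha, hb] using hred
    have hunit : IsUnit (a' * b - a * b') :=
      hcopab.isUnit_of_dvd' ⟨p, hak⟩ ⟨q, hbk⟩
    rcases Int.isUnit_iff.mp hunit with h' | h'
    · exact h'
    · omega
  -- Step 4: the gap formula and conclusion
  have hgap : ∀ i : ℕ, r (i+1) - r i = 1 / (((r i).den : ℚ) * ((r (i+1)).den : ℚ)) := by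
    intro i
    have h' : ((r (i+1)).num : ℚ) * ((r i).den : ℚ) - ((r i).num : ℚ) * ((r (i+1)).den : ℚ)
        = 1 := by exact_mod_cast huni i
    have e1 : r i * ((r i).den : ℚ) = ((r i).num : ℚ) := Rat.mul_den_eq_num _
    have e2 : r (i+1) * ((r (i+1)).den : ℚ) = ((r (i+1)).num : ℚ) := Rat.mul_den_eq_num _
    have hD : ((r i).den : ℚ) * ((r (i+1)).den : ℚ) ≠ 0 := by
      have := (r i).pos; have := (r (i+1)).pos; positivity
    rw [eq_div_iff hD]
    linear_combination h' + ((r i).den : ℚ) * e2 - ((r (i+1)).den : ℚ) * e1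
  intro i
  rw [show i + 2 = i + 1 + 1 from rfl, hgap i, hgap (i+1)]
  have h01 : (r i).den < (r (i+1)).den := hden i (i+1) (by omega)
  have h12 : (r (i+1)).den < (r (i+1+1)).den := hden (i+1) (i+1+1) (by omega)
  have hp0 : (0:ℚ) < ((r i).den : ℚ) * ((r (i+1)).den : ℚ) := by
    have := (r i).pos; have := (r (i+1)).pos; positivity
  have hlt : (r i).den * (r (i+1)).den < (r (i+1)).den * (r (i+1+1)).den := by
    have h02 : (r i).den < (r (i+1+1)).den := by omega
    calc (r i).den * (r (i+1)).den < (r (i+1+1)).den * (r (i+1)).den := by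
          exact Nat.mul_lt_mul_of_lt_of_le h02 (le_refl _) (r (i+1)).pos
      _ = (r (i+1)).den * (r (i+1+1)).den := Nat.mul_comm _ _
  exact div_lt_div_of_pos_left one_pos hp0 (by exact_mod_cast hlt)
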